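/- Let Γ = (V,E) be a finite graph such that every subset W ⊆ V with |W| ≤ |V|/2 that is disconnected from its complement (after some fixed edge removal) satisfies |W| < |V|/3. Then there exists a connected component of the edge-removed graph with more than 2|V|/3 vertices. -/

import Mathlib

open Finset in
private lemma exists_min_aux {α : Type*} [DecidableEq α] (P : Finset α → Prop) :
    ∀ T0 : Finset α, P T0 → ∃ T, P T ∧ ∀ k ∈ T, ¬ P (T.erase k) := by
  intro T0
  induction T0 using Finset.strongInduction with
  | _ T ih =>
    intro hT
    by_cases hx : ∃ k ∈ T, P (T.erase k)
    · obtain ⟨k, hk, hPk⟩ := hx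
      exact ih _ (Finset.erase_ssubset hk) hPk
    · push_neg at hx
      exact ⟨T, hT, hx⟩

theorem stmt9 {V : Type*} [Fintype V] (G : SimpleGraph V)
    (H : ∀ W : Set V, (∀ v ∈ W, ∀ w ∉ W, ¬ G.Adj v w) →
        (W.ncard : ℝ) ≤ (Fintype.card V : ℝ) / 2 →
        (W.ncard : ℝ) < (Fintype.card V : ℝ) / 3) :
    ∃ K : G.ConnectedComponent, (2 * (Fintype.card V : ℝ)) / 3 < (K.supp.ncard : ℝ) := by
  classical
  set n : ℕ := Fintype.card V with hn
  -- n > 0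
  have hn0 : 0 < (n : ℝ) := by
    have h0 := H ∅ (by simp) (by simp; positivity)
    simp only [Set.ncard_empty, Nat.cast_zero] at h0
    linarith
  by_contra hcon
  push_neg at hcon
  -- every component is separated from its complement
  have hsep : ∀ T : Finset G.ConnectedComponent,
      ∀ v ∈ {x | G.connectedComponentMk x ∈ T}, ∀ w ∉ {x | G.connectedComponentMk x ∈ T},
        ¬ G.Adj v w := by
    intro T v hv w hw hadj
    exact hw (by rwa [Set.mem_setOf_eq, ← SimpleGraph.ConnectedComponent.sound hadj.reachable])
  -- ncard of such union sets
  have hcardT : ∀ T : Finset G.ConnectedComponent,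
      ({x | G.connectedComponentMk x ∈ T} : Set V).ncard
        = ∑ k ∈ T, (Finset.univ.filter (fun v => G.connectedComponentMk v = k)).card := by
    intro T
    have : ({x | G.connectedComponentMk x ∈ T} : Set V)
        = ↑(Finset.univ.filter (fun v => G.connectedComponentMk v ∈ T)) := by
      ext x; simp
    rw [this, Set.ncard_coe_finset]
    rw [Finset.card_eq_sum_card_fiberwise (f := G.connectedComponentMk) (t := T)
      (s := Finset.univ.filter (fun v => G.connectedComponentMk v ∈ T))
      (fun x hx => (Finset.mem_filter.mp hx).2)]
    refine Finset.sum_congr rfl fun k hk => ?_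
    congr 1
    ext v
    simp only [Finset.mem_filter, Finset.mem_univ, true_and]
    constructor
    · exact fun h => h.2
    · exact fun h => ⟨h ▸ hk, h⟩
  have hsupp : ∀ K : G.ConnectedComponent,
      K.supp.ncard = (Finset.univ.filter (fun v => G.connectedComponentMk v = K)).card := by
    intro K
    have : K.supp = ↑(Finset.univ.filter (fun v => G.connectedComponentMk v = K)) := by
      ext x; simp [SimpleGraph.ConnectedComponent.mem_supp_iff]
    rw [this, Set.ncard_coe_finset]
  -- generic: a separated union of components with ncard c satisfies c < n/3 or n - c < n/3
  have hkey : ∀ T : Finset G.ConnectedComponent,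
      let c : ℝ := (({x | G.connectedComponentMk x ∈ T} : Set V).ncard : ℝ)
      c < (n : ℝ)/3 ∨ (n : ℝ) - c < (n : ℝ)/3 := by
    intro T
    set W : Set V := {x | G.connectedComponentMk x ∈ T} with hW
    by_cases hle : (W.ncard : ℝ) ≤ (n : ℝ)/2
    · exact Or.inl (H W (hsep T) hle)
    · right
      push_neg at hle
      have hcompl : W.ncard + Wᶜ.ncard = n := by
        have h := Set.ncard_add_ncard_compl W
        rwa [Nat.card_eq_fintype_card] at h
      have hsepc : ∀ v ∈ Wᶜ, ∀ w ∉ Wᶜ, ¬ G.Adj v w := by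
        intro v hv w hw hadj
        exact hsep T w (by simpa [hW] using hw) v (by simpa [hW] using hv) hadj.symm
      have h2 : (Wᶜ.ncard : ℝ) = (n : ℝ) - W.ncard := by
        have := hcompl; push_cast [← this]; ring
      have := H Wᶜ hsepc (by rw [h2]; linarith)
      rw [h2] at this
      linarith
  -- every component has ncard < n/3
  have hcomp : ∀ K : G.ConnectedComponent, (K.supp.ncard : ℝ) < (n : ℝ)/3 := by
    intro K
    have h1 := hkey ({K} : Finset _)
    simp only at h1
    have heq : ({x | G.connectedComponentMk x ∈ ({K} : Finset _)} : Set V) = K.supp := by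
      ext x; simp [SimpleGraph.ConnectedComponent.mem_supp_iff]
    rw [heq] at h1
    rcases h1 with h | h
    · exact h
    · have := hcon K
      linarith
  -- total sum is n
  have htotal : ({x | G.connectedComponentMk x ∈ (Finset.univ : Finset G.ConnectedComponent)} : Set V).ncard = n := by
    have : ({x | G.connectedComponentMk x ∈ (Finset.univ : Finset G.ConnectedComponent)} : Set V) = Set.univ := by
      ext x; simp
    rw [this, Set.ncard_univ, Nat.card_eq_fintype_card]
  -- minimal T with ncard ≥ n/3
  obtain ⟨T, hT, hTmin⟩ := exists_min_aux
    (fun T : Finset G.ConnectedComponent =>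
      (n : ℝ)/3 ≤ (({x | G.connectedComponentMk x ∈ T} : Set V).ncard : ℝ))
    Finset.univ (by show (n : ℝ)/3 ≤ _; rw [htotal]; linarith)
  -- T nonempty
  have hTne : T.Nonempty := by
    rcases T.eq_empty_or_nonempty with rfl | h
    · simp at hT; linarith
    · exact h
  obtain ⟨k, hk⟩ := hTne
  -- sum over T < 2n/3
  have hsum : ∀ S : Finset G.ConnectedComponent,
      (({x | G.connectedComponentMk x ∈ S} : Set V).ncard : ℝ)
        = ∑ j ∈ S, ((j.supp.ncard : ℝ)) := by
    intro S
    rw [hcardT]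
    push_cast
    exact Finset.sum_congr rfl fun j _ => by rw [hsupp]
  have hsplit : (({x | G.connectedComponentMk x ∈ T} : Set V).ncard : ℝ)
      = (({x | G.connectedComponentMk x ∈ T.erase k} : Set V).ncard : ℝ) + (k.supp.ncard : ℝ) := by
    rw [hsum, hsum, ← Finset.sum_erase_add T _ hk]
  have hlt : (({x | G.connectedComponentMk x ∈ T.erase k} : Set V).ncard : ℝ) < (n : ℝ)/3 := by
    have := hTmin k hk
    push_neg at this
    exact this
  have hub : (({x | G.connectedComponentMk x ∈ T} : Set V).ncard : ℝ) < 2*(n : ℝ)/3 := by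
    have := hcomp k
    rw [hsplit]; linarith
  rcases hkey T with h | h
  · linarith
  · linarith
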